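/- arXiv:1403.8017 — 3 statements merged into one kernel-verified Lean document; each statement's English description precedes it below -/
import Mathlib

section
/- Let b > 0 and α < 0 be real numbers, let ℓ ≥ 1 be a fixed integer, and set r = r(n) = b·n^α. Define G_ℓ(n) = (Γ((n-ℓ)/r + 1)/Γ((n-ℓ)/2 + 1)) · (Γ(n/2 + 1)/Γ(n/r + 1))^{(n-ℓ)/n}. Then lim_{n→∞} G_ℓ(n) = 0. (G_ℓ(n) equals the expected (n-ℓ)-dimensional volume E V_{n-ℓ}(Z_0 ∩ L) of the section of the zero cell Z_0, normalized so that E V_n(Z_0) = 1, with an (n-ℓ)-dimensional subspace L.) -/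
open MeasureTheory Real Filter

open Set

noncomputable def fG (v : ℝ) : ℝ := Real.log (Real.Gamma (v + 1))

lemma fG_rec {v : ℝ} (hv : 0 ≤ v) : fG (v + 1) = Real.log (v + 1) + fG v := by
  have h1 : (0:ℝ) < v + 1 := by linarith
  have h2 : (0:ℝ) < Real.Gamma (v + 1) := Real.Gamma_pos_of_pos h1
  unfold fG
  rw [show v + 1 + 1 = (v + 1) + 1 by ring, Real.Gamma_add_one h1.ne',
    Real.log_mul h1.ne' h2.ne']

lemma fG_convex_comb {a b s : ℝ} (ha : 0 ≤ a) (hab : a < b) (hs0 : 0 ≤ s) (hs1 : s ≤ 1) :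
    fG ((1 - s) * a + s * b) ≤ (1 - s) * fG a + s * fG b := by
  have h := Real.convexOn_log_Gamma.2 (show a + 1 ∈ Ioi (0:ℝ) by simp; linarith)
    (show b + 1 ∈ Ioi (0:ℝ) by simp; linarith) (by linarith : (0:ℝ) ≤ 1 - s) hs0 (by ring)
  simpa [fG, Function.comp, smul_eq_mul, show (1-s) * (a+1) + s * (b+1) = ((1-s)*a + s*b) + 1 by ring]
    using h

lemma fG_slope {a1 b1 a2 b2 : ℝ} (ha1 : 0 ≤ a1) (ha2 : 0 ≤ a2) (h11 : a1 < b1) (h22 : a2 < b2)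
    (ha : a1 ≤ a2) (hb : b1 ≤ b2) :
    (fG b1 - fG a1) / (b1 - a1) ≤ (fG b2 - fG a2) / (b2 - a2) := by
  have hg := Real.convexOn_log_Gamma
  have mem : ∀ v : ℝ, 0 ≤ v → v + 1 ∈ Ioi (0:ℝ) := fun v hv => by simp; linarith
  have hb1 : (0:ℝ) ≤ b1 := le_trans ha1 h11.le
  have hb2 : (0:ℝ) ≤ b2 := le_trans ha2 h22.le
  have k1 : (fG b1 - fG a1) / (b1 - a1) ≤ (fG b2 - fG a1) / (b2 - a1) := by
    have := hg.secant_mono (mem a1 ha1) (mem b1 hb1) (mem b2 hb2)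
      (by intro h; apply h11.ne'; linarith [add_right_cancel h])
      (by intro h; apply (h11.trans_le hb).ne'; linarith [add_right_cancel h])
      (by linarith)
    simpa [fG, Function.comp, add_sub_add_right_eq_sub] using this
  have k2 : (fG b2 - fG a1) / (b2 - a1) ≤ (fG b2 - fG a2) / (b2 - a2) := by
    have := hg.secant_mono (mem b2 hb2) (mem a1 ha1) (mem a2 ha2)
      (by intro h; apply (h11.trans_le hb).ne; linarith [add_right_cancel h])
      (by intro h; apply h22.ne; linarith [add_right_cancel h])
      (by linarith)
    calc (fG b2 - fG a1) / (b2 - a1) = (fG a1 - fG b2) / (a1 - b2) := by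
          rw [← neg_div_neg_eq]; ring_nf
      _ ≤ (fG a2 - fG b2) / (a2 - b2) := by
          simpa [fG, Function.comp, add_sub_add_right_eq_sub] using this
      _ = (fG b2 - fG a2) / (b2 - a2) := by rw [← neg_div_neg_eq]; ring_nf
  exact k1.trans k2

/-- `h(u) = fG (t u) - t fG u` is antitone in `u`. -/
lemma h_mono {t x1 x2 : ℝ} (ht0 : 0 < t) (ht1 : t ≤ 1) (hx1 : 0 ≤ x1) (h12 : x1 ≤ x2) :
    fG (t * x2) - t * fG x2 ≤ fG (t * x1) - t * fG x1 := by
  rcases eq_or_lt_of_le h12 with rfl | h12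
  · exact le_refl _
  · have hx2 : (0:ℝ) ≤ x2 := le_trans hx1 h12.le
    have hd : 0 < x2 - x1 := by linarith
    have key := fG_slope (a1 := t * x1) (b1 := t * x2) (a2 := x1) (b2 := x2)
      (by positivity) hx1 (by nlinarith) h12
      (by nlinarith) (by nlinarith)
    rw [show t * x2 - t * x1 = t * (x2 - x1) by ring] at key
    have := (div_le_div_iff₀ (by positivity) hd).mp key
    nlinarith

/-- One unit step decreases `h` by at least `t(1-t)/2`. -/
lemma h_step {t u : ℝ} (ht0 : 0 < t) (ht1 : t < 1) (hu : 1 ≤ u) :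
    fG (t * (u + 1)) - t * fG (u + 1) ≤ fG (t * u) - t * fG u - t * (1 - t) / 2 := by
  have hu0 : (0:ℝ) ≤ u := by linarith
  have htu : (0:ℝ) ≤ t * u := by positivity
  have h1 : fG (t * (u + 1)) ≤ fG (t * u) + t * Real.log (t * u + 1) := by
    have hc := fG_convex_comb (a := t * u) (b := t * u + 1) (s := t) htu (by linarith)
      ht0.le ht1.le
    rw [show (1 - t) * (t*u) + t * (t*u+1) = t * (u + 1) by ring] at hc
    have hrec := fG_rec htu
    nlinarith
  have h2 : fG (u + 1) = Real.log (u + 1) + fG u := fG_rec hu0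
  have h3 : Real.log (t * u + 1) - Real.log (u + 1) ≤ -(1 - t) / 2 := by
    have hpos : (0:ℝ) < (t * u + 1) / (u + 1) := by positivity
    have hlog : Real.log ((t * u + 1) / (u + 1)) ≤ (t * u + 1) / (u + 1) - 1 :=
      Real.log_le_sub_one_of_pos hpos
    rw [Real.log_div (by positivity) (by positivity)] at hlog
    have : (t * u + 1) / (u + 1) - 1 ≤ -(1 - t) / 2 := by
      rw [div_sub_one (by positivity : (u+1:ℝ) ≠ 0), div_le_div_iff₀ (by positivity) (by norm_num)]
      nlinarith
    linarith
  nlinarith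

lemma h_chain {t m : ℝ} (ht0 : 0 < t) (ht1 : t < 1) (hm : 1 ≤ m) (k : ℕ) :
    fG (t * (m + k)) - t * fG (m + k) ≤ fG (t * m) - t * fG m - k * (t * (1 - t) / 2) := by
  induction k with
  | zero => simp
  | succ k ih =>
      have hs := h_step ht0 ht1 (show (1:ℝ) ≤ m + k by push_cast; linarith [Nat.cast_nonneg (α := ℝ) k])
      push_cast
      push_cast at ih
      rw [show m + ((k:ℝ) + 1) = (m + k) + 1 by ring]
      nlinarith

lemma h_main {t m x : ℝ} (ht0 : 0 < t) (ht1 : t < 1) (hm : 1 ≤ m) (hx : m ≤ x) :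
    fG (t * x) - t * fG x ≤ fG (t * m) - t * fG m - ⌊x - m⌋₊ * (t * (1 - t) / 2) := by
  set k := ⌊x - m⌋₊ with hk
  have hk1 : (k:ℝ) ≤ x - m := Nat.floor_le (by linarith)
  have h1 : fG (t * x) - t * fG x ≤ fG (t * (m + k)) - t * fG (m + k) :=
    h_mono ht0 ht1.le (by linarith [Nat.cast_nonneg (α := ℝ) k]) (by linarith)
  exact h1.trans (h_chain ht0 ht1 hm k)

set_option maxHeartbeats 1000000 in
/-- For `b > 0`, `α < 0`, `r = b n^α` and fixed `ℓ ≥ 1`, the expected sectional volume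
`G_ℓ(n) = (Γ((n-ℓ)/r + 1)/Γ((n-ℓ)/2 + 1)) (Γ(n/2 + 1)/Γ(n/r + 1))^{(n-ℓ)/n}` tends to `0`. -/
theorem limit_sectional_volume_alpha_neg (b α : ℝ) (hb : 0 < b) (hα : α < 0)
    (ℓ : ℕ) (hℓ : 1 ≤ ℓ) :
    Filter.Tendsto
      (fun n : ℕ =>
        (Real.Gamma (((n : ℝ) - ℓ) / (b * (n : ℝ) ^ α) + 1) /
            Real.Gamma (((n : ℝ) - ℓ) / 2 + 1)) *
          (Real.Gamma ((n : ℝ) / 2 + 1) / Real.Gamma ((n : ℝ) / (b * (n : ℝ) ^ α) + 1)) ^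
            (((n : ℝ) - ℓ) / n))
      Filter.atTop (nhds 0) := by
  have hℓ1 : (1:ℝ) ≤ (ℓ:ℝ) := by exact_mod_cast hℓ
  have hpow : Tendsto (fun n : ℕ => (n:ℝ)^(-α)) atTop atTop :=
    (tendsto_rpow_atTop (by linarith)).comp tendsto_natCast_atTop_atTop
  have hpb : Tendsto (fun n : ℕ => (n:ℝ)^(-α)/b) atTop atTop := hpow.atTop_div_const hb
  -- the explicit decay rate
  have hmin : Tendsto (fun n : ℕ => (ℓ:ℝ)/4 * ((n:ℝ)^(-α)/b - 3/2)) atTop atTop := by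
    have := (tendsto_atTop_add_const_right atTop (-(3:ℝ)/2) hpb).const_mul_atTop
      (show (0:ℝ) < (ℓ:ℝ)/4 by linarith)
    simpa [sub_eq_add_neg, neg_div] using this
  have hD : Tendsto (fun n : ℕ =>
      ((n:ℝ)/(b*(n:ℝ)^α) - (n:ℝ)/2 - 1) * ((ℓ:ℝ)/(4*(n:ℝ)))) atTop atTop := by
    apply tendsto_atTop_mono' atTop _ hmin
    filter_upwards [eventually_ge_atTop 1] with n hn
    have hn0 : (0:ℝ) < n := by exact_mod_cast hn
    have hp : (0:ℝ) < (n:ℝ)^α := Real.rpow_pos_of_pos hn0 α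
    have hneg : (n:ℝ)^(-α) = ((n:ℝ)^α)⁻¹ := Real.rpow_neg hn0.le α
    have key : ((n:ℝ)/(b*(n:ℝ)^α) - (n:ℝ)/2 - 1) * ((ℓ:ℝ)/(4*(n:ℝ)))
        = (ℓ:ℝ)/4 * (((n:ℝ)^α)⁻¹/b - 1/2 - 1/n) := by
      field_simp
    rw [key, hneg]
    have h1n : (1:ℝ)/n ≤ 1 := by
      rw [div_le_one hn0]; exact_mod_cast hn
    have h2 : (((n:ℝ)^α)⁻¹/b - 3/2) ≤ (((n:ℝ)^α)⁻¹/b - 1/2 - 1/n) := by linarith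
    exact mul_le_mul_of_nonneg_left h2 (by linarith)
  apply squeeze_zero' (g := fun n : ℕ =>
      Real.exp (-(((n:ℝ)/(b*(n:ℝ)^α) - (n:ℝ)/2 - 1) * ((ℓ:ℝ)/(4*(n:ℝ))))))
  · -- nonnegativity, eventually
    filter_upwards [eventually_gt_atTop ℓ] with n hn
    have hnl : (ℓ:ℝ) < (n:ℝ) := by exact_mod_cast hn
    have hn0 : (0:ℝ) < n := by linarith
    have hp : (0:ℝ) < b * (n:ℝ)^α := by positivity
    have P1 : 0 < Real.Gamma (((n:ℝ) - ℓ) / (b * (n:ℝ)^α) + 1) := by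
      have : (0:ℝ) < ((n:ℝ) - ℓ) / (b * (n:ℝ)^α) := div_pos (by linarith) hp
      exact Real.Gamma_pos_of_pos (by linarith)
    have P2 : 0 < Real.Gamma (((n:ℝ) - ℓ) / 2 + 1) := by
      have : (0:ℝ) < ((n:ℝ) - ℓ) / 2 := by linarith
      exact Real.Gamma_pos_of_pos (by linarith)
    have P3 : 0 < Real.Gamma ((n:ℝ)/2 + 1) := Real.Gamma_pos_of_pos (by positivity)
    have P4 : 0 < Real.Gamma ((n:ℝ)/(b*(n:ℝ)^α) + 1) := by
      have : (0:ℝ) < (n:ℝ)/(b*(n:ℝ)^α) := div_pos hn0 hp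
      exact Real.Gamma_pos_of_pos (by linarith)
    positivity
  · -- the key bound, eventually
    filter_upwards [eventually_ge_atTop (2*ℓ), hpb.eventually_ge_atTop 2] with n hn2 hx2
    have hn2' : (2:ℝ)*ℓ ≤ (n:ℝ) := by exact_mod_cast hn2
    have hn0 : (0:ℝ) < n := by linarith
    set t : ℝ := ((n:ℝ) - ℓ)/n with htdef
    set m : ℝ := (n:ℝ)/2 with hmdef
    set x : ℝ := (n:ℝ)/(b*(n:ℝ)^α) with hxdef
    clear_value t m x
    have hp : (0:ℝ) < (n:ℝ)^α := Real.rpow_pos_of_pos hn0 α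
    have hneg : (n:ℝ)^(-α) = ((n:ℝ)^α)⁻¹ := Real.rpow_neg hn0.le α
    have hxval : x = (n:ℝ) * ((n:ℝ)^(-α)/b) := by
      rw [hxdef, hneg]; field_simp
    have hxbig : 2*(n:ℝ) ≤ x := by rw [hxval]; nlinarith
    have ht0 : 0 < t := by rw [htdef]; exact div_pos (by linarith) hn0
    have ht1 : t < 1 := by rw [htdef, div_lt_one hn0]; linarith
    have hthalf : 1/2 ≤ t := by rw [htdef, le_div_iff₀ hn0]; linarith
    have hm1 : (1:ℝ) ≤ m := by rw [hmdef]; linarith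
    have hxm : m ≤ x := by rw [hmdef]; linarith
    have hxm1 : 0 ≤ x - m - 1 := by rw [hmdef]; linarith
    have hx0 : (0:ℝ) ≤ x := by linarith
    have e1 : ((n:ℝ) - ℓ)/(b*(n:ℝ)^α) = t*x := by
      rw [htdef, hxdef]; field_simp
    have e2 : ((n:ℝ) - ℓ)/2 = t*m := by
      rw [htdef, hmdef]; field_simp
    have P1 : 0 < Real.Gamma (t*x + 1) := Real.Gamma_pos_of_pos (by positivity)
    have P2 : 0 < Real.Gamma (t*m + 1) := Real.Gamma_pos_of_pos (by positivity)
    have P3 : 0 < Real.Gamma (m + 1) := Real.Gamma_pos_of_pos (by positivity)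
    have P4 : 0 < Real.Gamma (x + 1) := Real.Gamma_pos_of_pos (by positivity)
    rw [e1, e2]
    have hGpos : 0 < Real.Gamma (t*x+1) / Real.Gamma (t*m+1) *
        (Real.Gamma (m+1) / Real.Gamma (x+1)) ^ t := by positivity
    rw [← Real.exp_log hGpos]
    apply Real.exp_le_exp.mpr
    have hlog : Real.log (Real.Gamma (t*x+1) / Real.Gamma (t*m+1) *
        (Real.Gamma (m+1) / Real.Gamma (x+1)) ^ t)
        = (fG (t*x) - fG (t*m)) + t * (fG m - fG x) := by
      rw [Real.log_mul (div_pos P1 P2).ne' (Real.rpow_pos_of_pos (div_pos P3 P4) t).ne',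
        Real.log_div P1.ne' P2.ne', Real.log_rpow (div_pos P3 P4),
        Real.log_div P3.ne' P4.ne']
      simp only [fG]
      try ring
    rw [hlog]
    have key := h_main ht0 ht1 hm1 hxm
    have hk2 : x - m - 1 ≤ (⌊x - m⌋₊ : ℝ) := by
      have := Nat.lt_floor_add_one (x - m); linarith
    have h1mt : 1 - t = (ℓ:ℝ)/n := by rw [htdef]; field_simp; ring
    have hc : (ℓ:ℝ)/(4*n) ≤ t*(1-t)/2 := by
      rw [h1mt, show (ℓ:ℝ)/(4*n) = ((ℓ:ℝ)/n)/4 by rw [div_div, mul_comm]]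
      have hln : (0:ℝ) ≤ (ℓ:ℝ)/n := by positivity
      nlinarith [mul_nonneg hln (by linarith : (0:ℝ) ≤ t - 1/2)]
    have hDk : (x - m - 1) * ((ℓ:ℝ)/(4*n)) ≤ (⌊x - m⌋₊ : ℝ) * (t*(1-t)/2) :=
      mul_le_mul hk2 hc (by positivity) (Nat.cast_nonneg _)
    linarith
  · exact Real.tendsto_exp_atBot.comp (tendsto_neg_atTop_atBot.comp hD)
end

section
/- Let b > 0, let ℓ ≥ 0 be a fixed integer, and set r = b (constant in n). Define G_ℓ(n) = (Γ((n-ℓ)/r + 1)/Γ((n-ℓ)/2 + 1)) · (Γ(n/2 + 1)/Γ(n/r + 1))^{(n-ℓ)/n}. Then lim_{n→∞} G_ℓ(n) = e^{-ℓ/b + ℓ/2}. -/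
open MeasureTheory Real Filter
open Nat


lemma log_ratio_tendsto (s : ℝ) :
    Tendsto (fun x : ℝ => log ((x + s) / x)) atTop (nhds 0) := by
  have h1 : Tendsto (fun x : ℝ => 1 + s / x) atTop (nhds 1) := by
    simpa using tendsto_const_nhds.add (tendsto_const_nhds.div_atTop (tendsto_id (α := ℝ)))
  have h2 := ((Real.continuousAt_log one_ne_zero).tendsto.comp h1)
  simp only [Real.log_one] at h2
  refine Tendsto.congr' ?_ h2
  filter_upwards [eventually_gt_atTop 0] with x hx
  rw [Function.comp_apply]
  congr 1
  field_simp

lemma ratio_log_base (s : ℝ) (hs : 0 ≤ s) (hs1 : s ≤ 1) :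
    Tendsto (fun x : ℝ => log (Gamma (x + s)) - log (Gamma x) - s * log x)
      atTop (nhds 0) := by
  have hlow : Tendsto (fun x : ℝ => (-(1 - s)) * log ((x + s) / x)) atTop (nhds 0) := by
    simpa using (log_ratio_tendsto s).const_mul (-(1 - s))
  refine tendsto_of_tendsto_of_tendsto_of_le_of_le' hlow tendsto_const_nhds ?_ ?_
  · -- lower bound
    filter_upwards [eventually_ge_atTop 1] with x hx
    have hx0 : (0:ℝ) < x := lt_of_lt_of_le one_pos hx
    have hxs : (0:ℝ) < x + s := by linarith
    have hconv := Real.convexOn_log_Gamma.2 (Set.mem_Ioi.2 hxs)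
      (Set.mem_Ioi.2 (by linarith : (0:ℝ) < x + s + 1)) hs (by linarith : (0:ℝ) ≤ 1 - s)
      (by ring)
    have hpoint : s • (x + s) + (1 - s) • (x + s + 1) = x + 1 := by
      simp [smul_eq_mul]; ring
    rw [hpoint] at hconv
    simp only [Function.comp_apply, smul_eq_mul] at hconv
    have hG1 : log (Gamma (x + 1)) = log x + log (Gamma x) := by
      rw [Real.Gamma_add_one (ne_of_gt hx0), Real.log_mul (ne_of_gt hx0)
        (ne_of_gt (Real.Gamma_pos_of_pos hx0))]
    have hG2 : log (Gamma (x + s + 1)) = log (x + s) + log (Gamma (x + s)) := by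
      rw [Real.Gamma_add_one (ne_of_gt hxs), Real.log_mul (ne_of_gt hxs)
        (ne_of_gt (Real.Gamma_pos_of_pos hxs))]
    rw [hG1, hG2] at hconv
    have hlog : log ((x + s) / x) = log (x + s) - log x :=
      Real.log_div (ne_of_gt hxs) (ne_of_gt hx0)
    nlinarith [hconv]
  · -- upper bound
    filter_upwards [eventually_ge_atTop 1] with x hx
    have hx0 : (0:ℝ) < x := lt_of_lt_of_le one_pos hx
    have hconv := Real.convexOn_log_Gamma.2 (Set.mem_Ioi.2 hx0)
      (Set.mem_Ioi.2 (by linarith : (0:ℝ) < x + 1)) (by linarith : (0:ℝ) ≤ 1 - s) hs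
      (by ring)
    have hpoint : (1 - s) • x + s • (x + 1) = x + s := by simp [smul_eq_mul]; ring
    rw [hpoint] at hconv
    simp only [Function.comp_apply, smul_eq_mul] at hconv
    have hG1 : log (Gamma (x + 1)) = log x + log (Gamma x) := by
      rw [Real.Gamma_add_one (ne_of_gt hx0), Real.log_mul (ne_of_gt hx0)
        (ne_of_gt (Real.Gamma_pos_of_pos hx0))]
    rw [hG1] at hconv
    nlinarith [hconv]

lemma ratio_log (s : ℝ) (hs : 0 ≤ s) :
    Tendsto (fun x : ℝ => log (Gamma (x + s)) - log (Gamma x) - s * log x)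
      atTop (nhds 0) := by
  obtain ⟨n, hn⟩ := exists_nat_ge s
  induction n generalizing s with
  | zero =>
    have hs0 : s = 0 := le_antisymm (by exact_mod_cast hn) hs
    subst hs0
    simpa using ratio_log_base 0 le_rfl zero_le_one
  | succ n ih =>
    rcases le_or_gt s 1 with h1 | h1
    · exact ratio_log_base s hs h1
    · have ih' := ih (s - 1) (by linarith) (by push_cast at hn ⊢; linarith)
      have hlr := log_ratio_tendsto (s - 1)
      have := ih'.add hlr
      rw [add_zero] at this
      refine Tendsto.congr' ?_ this
      filter_upwards [eventually_ge_atTop 1] with x hx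
      have hx0 : (0:ℝ) < x := lt_of_lt_of_le one_pos hx
      have hxs : (0:ℝ) < x + (s - 1) := by linarith
      have hG : Gamma (x + s) = (x + (s - 1)) * Gamma (x + (s - 1)) := by
        rw [show x + s = x + (s - 1) + 1 by ring, Real.Gamma_add_one (ne_of_gt hxs)]
      rw [hG, Real.log_mul (ne_of_gt hxs) (ne_of_gt (Real.Gamma_pos_of_pos hxs)),
        Real.log_div (ne_of_gt hxs) (ne_of_gt hx0)]
      ring

lemma factorial_log_err : ∃ C : ℝ, 0 ≤ C ∧ ∀ n : ℕ, 1 ≤ n →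
    |Real.log (n ! : ℝ) - ((n : ℝ) * Real.log n - n)| ≤ C + Real.log (2 * n) := by
  obtain ⟨c, hc⟩ : ∃ c : ℝ, ∀ n : ℕ, c ≤ Real.log (Stirling.stirlingSeq (n + 1)) :=
    ⟨_, Stirling.log_stirlingSeq_bounded_by_constant⟩
  set C : ℝ := max (max (-c) |log (Stirling.stirlingSeq 1)|) 0 with hC
  refine ⟨C, le_max_right _ _, fun n hn => ?_⟩
  have hn0 : (0:ℝ) < n := by exact_mod_cast hn
  have hform : Real.log (n ! : ℝ) - ((n : ℝ) * Real.log n - n)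
      = Real.log (Stirling.stirlingSeq n) + Real.log (2 * n) / 2 := by
    rw [Stirling.stirlingSeq]
    rw [Real.log_div (by positivity) (by positivity), Real.log_mul (by positivity) (by positivity),
      Real.log_pow, Real.log_sqrt (by positivity), Real.log_div (ne_of_gt hn0) (exp_ne_zero 1),
      Real.log_exp]
    ring
  rw [hform]
  have hn1 : (1:ℝ) ≤ n := by exact_mod_cast hn
  have hlog2n : 0 ≤ Real.log (2 * n) := by
    apply Real.log_nonneg; push_cast; linarith
  have hup : Real.log (Stirling.stirlingSeq n) ≤ C := by
    obtain ⟨k, rfl⟩ := Nat.exists_eq_add_of_le hn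
    have := Stirling.log_stirlingSeq'_antitone (Nat.zero_le k)
    simp only [Function.comp_apply, Nat.succ_eq_add_one, Nat.zero_add] at this
    calc Real.log (Stirling.stirlingSeq (1 + k)) ≤ Real.log (Stirling.stirlingSeq 1) := by
          simpa [Nat.add_comm] using this
      _ ≤ |Real.log (Stirling.stirlingSeq 1)| := le_abs_self _
      _ ≤ C := le_trans (le_max_right _ _) (le_max_left _ _)
  have hlo : -C ≤ Real.log (Stirling.stirlingSeq n) := by
    obtain ⟨k, rfl⟩ := Nat.exists_eq_add_of_le hn
    have h1 : c ≤ Real.log (Stirling.stirlingSeq (k + 1)) := hc k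
    have h2 : -C ≤ c := by
      have : -c ≤ C := le_trans (le_max_left _ _) (le_max_left _ _)
      linarith
    calc -C ≤ c := h2
      _ ≤ _ := by simpa [Nat.add_comm] using h1
  rw [abs_le]
  constructor <;> nlinarith [abs_nonneg (Real.log (Stirling.stirlingSeq 1))]

lemma f_ub {a c : ℝ} (ha : 0 < a) (hac : a ≤ c) :
    c * Real.log c - c - (a * Real.log a - a) ≤ (c - a) * Real.log c := by
  have hc : 0 < c := lt_of_lt_of_le ha hac
  have h1 : Real.log (c / a) ≤ c / a - 1 := Real.log_le_sub_one_of_pos (by positivity)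
  have h2 : Real.log (c / a) = Real.log c - Real.log a := Real.log_div (ne_of_gt hc) (ne_of_gt ha)
  have h3 : a * Real.log (c / a) ≤ a * (c / a - 1) := mul_le_mul_of_nonneg_left h1 (le_of_lt ha)
  have h4 : a * (c / a - 1) = c - a := by field_simp
  nlinarith [h3]

lemma f_lb {a c : ℝ} (ha : 0 < a) (hac : a ≤ c) :
    (c - a) * Real.log a ≤ c * Real.log c - c - (a * Real.log a - a) := by
  have hc : 0 < c := lt_of_lt_of_le ha hac
  have h1 : Real.log (a / c) ≤ a / c - 1 := Real.log_le_sub_one_of_pos (by positivity)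
  have h2 : Real.log (a / c) = Real.log a - Real.log c := Real.log_div (ne_of_gt ha) (ne_of_gt hc)
  have h3 : c * (Real.log a - Real.log c) ≤ c * (a / c - 1) := by
    rw [← h2]; exact mul_le_mul_of_nonneg_left h1 (le_of_lt hc)
  have h4 : c * (a / c - 1) = a - c := by field_simp
  nlinarith [h3]

lemma f_mono {a c : ℝ} (ha : 1 ≤ a) (hac : a ≤ c) :
    a * Real.log a - a ≤ c * Real.log c - c := by
  have := f_lb (lt_of_lt_of_le one_pos ha) hac
  nlinarith [Real.log_nonneg ha, this]

lemma gamma_log_abs_bound : ∃ C : ℝ, 0 ≤ C ∧ ∀ y : ℝ, 2 ≤ y →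
    |Real.log (Real.Gamma (y + 1)) - (y * Real.log y - y)| ≤ 2 * Real.log y + C := by
  obtain ⟨C, hC0, hC⟩ := factorial_log_err
  refine ⟨C + Real.log 2 + Real.log 4, by positivity, fun y hy => ?_⟩
  have hy0 : (0:ℝ) < y := by linarith
  set m : ℕ := ⌊y⌋₊ with hm
  have hm2 : 2 ≤ m := Nat.le_floor (by exact_mod_cast hy)
  have hmy : (m : ℝ) ≤ y := Nat.floor_le (le_of_lt hy0)
  have hym : y < (m : ℝ) + 1 := Nat.lt_floor_add_one y
  have hm1 : (1:ℝ) ≤ m := by exact_mod_cast le_trans one_le_two hm2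
  -- Gamma monotonicity
  have hmono := Real.Gamma_strictMonoOn_Ici.monotoneOn
  have hglo : Real.log ((m ! : ℕ) : ℝ) ≤ Real.log (Real.Gamma (y + 1)) := by
    rw [← Real.Gamma_nat_eq_factorial]
    apply Real.log_le_log (Real.Gamma_pos_of_pos (by positivity))
    apply hmono (Set.mem_Ici.2 (by push_cast; linarith)) (Set.mem_Ici.2 (by linarith))
    push_cast; linarith
  have hghi : Real.log (Real.Gamma (y + 1)) ≤ Real.log (((m + 1)! : ℕ) : ℝ) := by
    rw [← Real.Gamma_nat_eq_factorial]
    apply Real.log_le_log (Real.Gamma_pos_of_pos (by linarith))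
    apply hmono (Set.mem_Ici.2 (by linarith)) (Set.mem_Ici.2 (by push_cast; linarith))
    push_cast; linarith
  have herr1 := hC m (by omega)
  have herr2 := hC (m + 1) (by omega)
  rw [abs_le] at herr1 herr2
  -- f-monotonicity facts
  have hf1 : (m : ℝ) * Real.log m - m ≥ (y - 1) * Real.log (y - 1) - (y - 1) :=
    f_mono (by linarith) (by linarith)
  have hf2 : ((m : ℝ) + 1) * Real.log ((m : ℝ) + 1) - ((m : ℝ) + 1)
      ≤ (y + 1) * Real.log (y + 1) - (y + 1) :=
    f_mono (by linarith) (by linarith)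
  -- increments of f
  have hinc1 : y * Real.log y - y - ((y - 1) * Real.log (y - 1) - (y - 1))
      ≤ Real.log y := by
    have h' := f_ub (a := y - 1) (c := y) (by linarith) (by linarith)
    rw [show y - (y - 1) = (1:ℝ) by ring, one_mul] at h'
    exact h'
  have hinc2 : (y + 1) * Real.log (y + 1) - (y + 1) - (y * Real.log y - y)
      ≤ Real.log (y + 1) := by
    have h' := f_ub (a := y) (c := y + 1) hy0 (by linarith)
    rw [show y + 1 - y = (1:ℝ) by ring, one_mul] at h'
    exact h'
  -- log comparisons
  have hly1 : Real.log (y + 1) ≤ Real.log 2 + Real.log y := by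
    rw [← Real.log_mul (by norm_num) (ne_of_gt hy0)]
    exact Real.log_le_log (by linarith) (by linarith)
  have hl2m : Real.log (2 * (m:ℝ)) ≤ Real.log 2 + Real.log y := by
    rw [← Real.log_mul (by norm_num) (ne_of_gt hy0)]
    exact Real.log_le_log (by positivity) (by linarith)
  have hl2m1 : Real.log (2 * ((m:ℝ) + 1)) ≤ Real.log 4 + Real.log y := by
    have : Real.log (4 * y) = Real.log 4 + Real.log y :=
      Real.log_mul (by norm_num) (ne_of_gt hy0)
    rw [← this]
    exact Real.log_le_log (by positivity) (by push_cast; linarith)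
  have hcast1 : ((m:ℝ) + 1) = ((m + 1 : ℕ) : ℝ) := by push_cast; ring
  rw [abs_le]
  constructor
  · -- lower
    have h := herr1.1
    have hly0 : 0 ≤ Real.log y := Real.log_nonneg (by linarith)
    nlinarith [hglo, hf1, hinc1, hl2m, Real.log_nonneg (show (1:ℝ) ≤ 2 by norm_num),
      Real.log_nonneg (show (1:ℝ) ≤ 4 by norm_num)]
  · -- upper
    have h := herr2.2
    push_cast at h
    have hly0 : 0 ≤ Real.log y := Real.log_nonneg (by linarith)
    nlinarith [hghi, hf2, hinc2, hl2m1, hly1, Real.log_nonneg (show (1:ℝ) ≤ 2 by norm_num),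
      Real.log_nonneg (show (1:ℝ) ≤ 4 by norm_num)]

lemma gamma_log_div_tendsto :
    Tendsto (fun y : ℝ => (Real.log (Real.Gamma (y + 1)) - (y * Real.log y - y)) / y)
      atTop (nhds 0) := by
  obtain ⟨C, hC0, hC⟩ := gamma_log_abs_bound
  have hlogy : Tendsto (fun y : ℝ => Real.log y / y) atTop (nhds 0) :=
    Real.isLittleO_log_id_atTop.tendsto_div_nhds_zero
  have hbnd : Tendsto (fun y : ℝ => 2 * (Real.log y / y) + C * y⁻¹) atTop (nhds 0) := by
    simpa using (hlogy.const_mul 2).add (tendsto_inv_atTop_zero.const_mul C)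
  have hbnd' : Tendsto (fun y : ℝ => -(2 * (Real.log y / y) + C * y⁻¹)) atTop (nhds 0) := by
    simpa using hbnd.neg
  refine tendsto_of_tendsto_of_tendsto_of_le_of_le' hbnd' hbnd ?_ ?_
  · filter_upwards [eventually_ge_atTop 2] with y hy
    have hy0 : (0:ℝ) < y := by linarith
    have h := (abs_le.1 (hC y hy)).1
    have : (-(2 * Real.log y + C)) / y ≤
        (Real.log (Real.Gamma (y + 1)) - (y * Real.log y - y)) / y := by gcongr <;> linarith
    calc -(2 * (Real.log y / y) + C * y⁻¹) = (-(2 * Real.log y + C)) / y := by ring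
      _ ≤ _ := this
  · filter_upwards [eventually_ge_atTop 2] with y hy
    have hy0 : (0:ℝ) < y := by linarith
    have h := (abs_le.1 (hC y hy)).2
    have : (Real.log (Real.Gamma (y + 1)) - (y * Real.log y - y)) / y
        ≤ (2 * Real.log y + C) / y := by gcongr
    calc _ ≤ (2 * Real.log y + C) / y := this
      _ = 2 * (Real.log y / y) + C * y⁻¹ := by ring

/-- For `b > 0`, constant distance exponent `r = b` and fixed `ℓ ≥ 0`, the expected sectional
volume `G_ℓ(n) = (Γ((n-ℓ)/r + 1)/Γ((n-ℓ)/2 + 1)) (Γ(n/2 + 1)/Γ(n/r + 1))^{(n-ℓ)/n}`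
tends to `e^{-ℓ/b + ℓ/2}`. -/
theorem limit_sectional_volume_alpha_zero (b : ℝ) (hb : 0 < b) (ℓ : ℕ) :
    Filter.Tendsto
      (fun n : ℕ =>
        (Real.Gamma (((n : ℝ) - ℓ) / b + 1) / Real.Gamma (((n : ℝ) - ℓ) / 2 + 1)) *
          (Real.Gamma ((n : ℝ) / 2 + 1) / Real.Gamma ((n : ℝ) / b + 1)) ^
            (((n : ℝ) - ℓ) / n))
      Filter.atTop (nhds (Real.exp (-(ℓ : ℝ) / b + (ℓ : ℝ) / 2))) := by
  have hb' : b ≠ 0 := ne_of_gt hb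
  have hsub : Tendsto (fun n : ℕ => (n:ℝ) - ℓ) atTop atTop :=
    (tendsto_atTop_add_const_right atTop (-(ℓ:ℝ)) tendsto_natCast_atTop_atTop).congr
      (fun n => (sub_eq_add_neg _ _).symm)
  have hx1 : Tendsto (fun n : ℕ => ((n:ℝ) - ℓ)/b + 1) atTop atTop :=
    tendsto_atTop_add_const_right _ 1 (hsub.atTop_div_const hb)
  have hx2 : Tendsto (fun n : ℕ => ((n:ℝ) - ℓ)/2 + 1) atTop atTop :=
    tendsto_atTop_add_const_right _ 1 (hsub.atTop_div_const two_pos)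
  -- P1
  have hP1 : Tendsto (fun n : ℕ => Real.log (Gamma (((n:ℝ) - ℓ)/b + 1))
      - Real.log (Gamma ((n:ℝ)/b + 1))
      + ((ℓ:ℝ)/b) * Real.log (((n:ℝ) - ℓ)/b + 1)) atTop (nhds 0) := by
    have h := ((ratio_log ((ℓ:ℝ)/b) (by positivity)).comp hx1).neg
    rw [neg_zero] at h
    refine h.congr fun n => ?_
    simp only [Function.comp_apply]
    rw [show ((n:ℝ) - ℓ)/b + 1 + (ℓ:ℝ)/b = (n:ℝ)/b + 1 by field_simp; ring]
    ring
  -- P2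
  have hP2 : Tendsto (fun n : ℕ => Real.log (Gamma ((n:ℝ)/2 + 1))
      - Real.log (Gamma (((n:ℝ) - ℓ)/2 + 1))
      - ((ℓ:ℝ)/2) * Real.log (((n:ℝ) - ℓ)/2 + 1)) atTop (nhds 0) := by
    have h := (ratio_log ((ℓ:ℝ)/2) (by positivity)).comp hx2
    refine h.congr fun n => ?_
    simp only [Function.comp_apply]
    rw [show ((n:ℝ) - ℓ)/2 + 1 + (ℓ:ℝ)/2 = (n:ℝ)/2 + 1 by field_simp; ring]
  -- P3
  have hP3 : ∀ c : ℝ, 0 < c → Tendsto (fun n : ℕ =>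
      ((ℓ:ℝ)/n) * (Real.log (Gamma ((n:ℝ)/c + 1))
        - ((n:ℝ)/c * Real.log ((n:ℝ)/c) - (n:ℝ)/c))) atTop (nhds 0) := by
    intro c hc
    have h := (gamma_log_div_tendsto.comp
      (tendsto_natCast_atTop_atTop.atTop_div_const hc)).const_mul ((ℓ:ℝ)/c)
    rw [mul_zero] at h
    refine Tendsto.congr' ?_ h
    filter_upwards [eventually_ge_atTop 1] with n hn
    have hn0 : (0:ℝ) < n := by exact_mod_cast hn
    simp only [Function.comp_apply]
    generalize Real.log (Gamma ((n:ℝ)/c + 1)) = L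
    generalize Real.log ((n:ℝ)/c) = M
    have hnne : ((n:ℝ)) ≠ 0 := ne_of_gt hn0
    have hcne : c ≠ 0 := ne_of_gt hc
    field_simp
  -- R
  have hR : ∀ c : ℝ, 0 < c → Tendsto (fun n : ℕ =>
      Real.log ((n:ℝ)/c) - Real.log (((n:ℝ) - ℓ)/c + 1)) atTop (nhds 0) := by
    intro c hc
    have h := (log_ratio_tendsto (((ℓ:ℝ) - c)/c)).comp
      (tendsto_atTop_add_const_right _ 1 (hsub.atTop_div_const hc))
    refine Tendsto.congr' ?_ h
    filter_upwards [eventually_gt_atTop ℓ] with n hn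
    have hnl : (ℓ:ℝ) < n := by exact_mod_cast hn
    have hn0 : (0:ℝ) < n := lt_of_le_of_lt (by positivity) hnl
    have hx0 : (0:ℝ) < ((n:ℝ) - ℓ)/c + 1 := by
      have := div_pos (by linarith : (0:ℝ) < (n:ℝ) - ℓ) hc; linarith
    simp only [Function.comp_apply]
    rw [show ((n:ℝ) - ℓ)/c + 1 + ((ℓ:ℝ) - c)/c = (n:ℝ)/c by field_simp; ring,
      Real.log_div (by positivity) (ne_of_gt hx0)]
  -- combine
  have hS := (((((hP1.add hP2).sub (hP3 2 two_pos)).add (hP3 b hb)).add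
      ((hR b hb).const_mul ((ℓ:ℝ)/b))).sub ((hR 2 two_pos).const_mul ((ℓ:ℝ)/2))).add_const
      ((ℓ:ℝ)/2 - (ℓ:ℝ)/b)
  rw [show (0:ℝ) + 0 - 0 + 0 + (ℓ:ℝ)/b * 0 - (ℓ:ℝ)/2 * 0 + ((ℓ:ℝ)/2 - (ℓ:ℝ)/b)
      = (ℓ:ℝ)/2 - (ℓ:ℝ)/b by ring] at hS
  have hexp := (Real.continuous_exp.continuousAt (x := (ℓ:ℝ)/2 - (ℓ:ℝ)/b)).tendsto.comp hS
  rw [show -(ℓ:ℝ)/b + (ℓ:ℝ)/2 = (ℓ:ℝ)/2 - (ℓ:ℝ)/b by ring]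
  refine Tendsto.congr' ?_ hexp
  filter_upwards [eventually_ge_atTop (ℓ + 1)] with n hn
  have hnl : (ℓ:ℝ) + 1 ≤ (n:ℝ) := by exact_mod_cast hn
  have hml : (0:ℝ) < (n:ℝ) - ℓ := by linarith
  have hn0 : (0:ℝ) < n := by
    have : (0:ℝ) ≤ (ℓ:ℝ) := by positivity
    linarith
  have hA : 0 < Gamma (((n:ℝ) - ℓ)/b + 1) := Real.Gamma_pos_of_pos
    (by have := div_pos hml hb; linarith)
  have hB : 0 < Gamma (((n:ℝ) - ℓ)/2 + 1) := Real.Gamma_pos_of_pos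
    (by have := div_pos hml two_pos; linarith)
  have hC : 0 < Gamma ((n:ℝ)/2 + 1) := Real.Gamma_pos_of_pos (by positivity)
  have hD : 0 < Gamma ((n:ℝ)/b + 1) := Real.Gamma_pos_of_pos (by positivity)
  have hCD : 0 < Gamma ((n:ℝ)/2 + 1) / Gamma ((n:ℝ)/b + 1) := div_pos hC hD
  have hGpos : 0 < (Gamma (((n:ℝ) - ℓ)/b + 1) / Gamma (((n:ℝ) - ℓ)/2 + 1)) *
      (Gamma ((n:ℝ)/2 + 1) / Gamma ((n:ℝ)/b + 1)) ^ (((n:ℝ) - ℓ)/(n:ℝ)) :=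
    mul_pos (div_pos hA hB) (Real.rpow_pos_of_pos hCD _)
  simp only [Function.comp_apply]
  rw [← Real.exp_log hGpos]
  congr 1
  rw [Real.log_mul (div_pos hA hB).ne' (Real.rpow_pos_of_pos hCD _).ne',
    Real.log_div hA.ne' hB.ne', Real.log_rpow hCD, Real.log_div hC.ne' hD.ne']
  generalize Real.log (Gamma (((n:ℝ) - ℓ)/b + 1)) = lA
  generalize Real.log (Gamma (((n:ℝ) - ℓ)/2 + 1)) = lB
  generalize Real.log (Gamma ((n:ℝ)/2 + 1)) = lC
  generalize Real.log (Gamma ((n:ℝ)/b + 1)) = lD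
  generalize Real.log (((n:ℝ) - ℓ)/b + 1) = L1
  generalize Real.log (((n:ℝ) - ℓ)/2 + 1) = L2
  generalize Real.log ((n:ℝ)/b) = Mb
  generalize Real.log ((n:ℝ)/2) = M2
  field_simp
  ring
end

section
/- Let b > 0 and α > 0 be real numbers, let ℓ ≥ 0 be a fixed integer, and set r = r(n) = b·n^α. Define G_ℓ(n) = (Γ((n-ℓ)/r + 1)/Γ((n-ℓ)/2 + 1)) · (Γ(n/2 + 1)/Γ(n/r + 1))^{(n-ℓ)/n}. Then lim_{n→∞} G_ℓ(n) = e^{ℓ/2}. -/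
open MeasureTheory Real Filter

noncomputable def lG (x : ℝ) : ℝ := Real.log (Real.Gamma (x + 1))

lemma wendel_upper {x a : ℝ} (hx : 0 < x) (ha : 0 ≤ a) (ha1 : a ≤ 1) :
    Real.log (Real.Gamma (x + a)) ≤ Real.log (Real.Gamma x) + a * Real.log x := by
  have h := Real.convexOn_log_Gamma.2 (Set.mem_Ioi.2 hx)
    (Set.mem_Ioi.2 (by linarith : (0:ℝ) < x + 1)) (by linarith : (0:ℝ) ≤ 1 - a) ha (by ring)
  simp only [smul_eq_mul, Function.comp_apply] at h
  have hc : (1 - a) * x + a * (x + 1) = x + a := by ring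
  rw [hc, Real.Gamma_add_one hx.ne'] at h
  rw [Real.log_mul hx.ne' (Real.Gamma_pos_of_pos hx).ne'] at h
  nlinarith [h]

lemma wendel_lower {x a : ℝ} (hx : 0 < x) (ha : 0 ≤ a) (ha1 : a ≤ 1) :
    Real.log (Real.Gamma (x + 1)) ≤ Real.log (Real.Gamma (x + a)) + (1 - a) * Real.log (x + a) := by
  have hxa : (0:ℝ) < x + a := by linarith
  have h := Real.convexOn_log_Gamma.2 (Set.mem_Ioi.2 hxa)
    (Set.mem_Ioi.2 (by linarith : (0:ℝ) < x + a + 1)) ha (by linarith : (0:ℝ) ≤ 1 - a) (by ring)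
  simp only [smul_eq_mul, Function.comp_apply] at h
  have hc : a * (x + a) + (1 - a) * (x + a + 1) = x + 1 := by ring
  rw [hc, Real.Gamma_add_one hxa.ne'] at h
  rw [Real.log_mul hxa.ne' (Real.Gamma_pos_of_pos hxa).ne'] at h
  nlinarith [h]

lemma lG_upper {y a : ℝ} (hy : 0 ≤ y) (ha : 0 ≤ a) (ha1 : a ≤ 1) :
    lG (y + a) ≤ lG y + a * Real.log (y + 1) := by
  have := wendel_upper (x := y + 1) (a := a) (by linarith) ha ha1
  simpa [lG, show y + a + 1 = y + 1 + a by ring] using this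

lemma lG_lower {y a : ℝ} (hy : 0 ≤ y) (ha : 0 ≤ a) (ha1 : a ≤ 1) :
    lG y + Real.log (y + 1) ≤ lG (y + a) + (1 - a) * Real.log (y + 1 + a) := by
  have h := wendel_lower (x := y + 1) (a := a) (by linarith) ha ha1
  have h2 : Real.Gamma (y + 1 + 1) = (y + 1) * Real.Gamma (y + 1) :=
    Real.Gamma_add_one (by linarith)
  rw [h2, Real.log_mul (by linarith) (Real.Gamma_pos_of_pos (by linarith)).ne'] at h
  simp only [lG, show y + a + 1 = y + 1 + a by ring]
  linarith

lemma log_shift {y : ℕ → ℝ} (hy : Tendsto y atTop atTop) (c : ℝ) (hc : 0 ≤ c) :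
    Tendsto (fun n => Real.log (y n + c) - Real.log (y n)) atTop (nhds 0) := by
  have h1 : Tendsto (fun n => 1 + c / y n) atTop (nhds 1) := by
    have := hy.inv_tendsto_atTop
    have h2 : Tendsto (fun n => c / y n) atTop (nhds 0) := by
      simpa [div_eq_mul_inv] using this.const_mul c
    simpa using (tendsto_const_nhds (x := (1:ℝ))).add h2
  have h3 : Tendsto (fun n => Real.log (1 + c / y n)) atTop (nhds 0) := by
    have := (Real.continuousAt_log (by norm_num : (1:ℝ) ≠ 0)).tendsto.comp h1
    simpa [Function.comp_def] using this
  apply h3.congr'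
  filter_upwards [hy.eventually_ge_atTop 1] with n hn
  rw [← Real.log_div (by positivity) (by positivity)]
  congr 1
  field_simp

lemma step_lemma {y : ℕ → ℝ} (hy : Tendsto y atTop atTop) {a : ℝ} (ha : 0 ≤ a) (ha1 : a ≤ 1) :
    Tendsto (fun n => lG (y n + a) - lG (y n) - a * Real.log (y n)) atTop (nhds 0) := by
  have hs1 := log_shift hy 1 zero_le_one
  have hs2 := log_shift hy (1 + a) (by linarith)
  apply tendsto_of_tendsto_of_tendsto_of_le_of_le'
    (g := fun n => (Real.log (y n + 1) - Real.log (y n)) -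
      (1 - a) * (Real.log (y n + (1 + a)) - Real.log (y n)))
    (h := fun n => a * (Real.log (y n + 1) - Real.log (y n)))
  · have := hs1.sub ((hs2.const_mul (1 - a)))
    simpa using this
  · simpa using hs1.const_mul a
  · filter_upwards [hy.eventually_ge_atTop 1] with n hn
    have h := lG_lower (y := y n) (a := a) (by linarith) ha ha1
    have : y n + 1 + a = y n + (1 + a) := by ring
    rw [this] at h
    nlinarith [h]
  · filter_upwards [hy.eventually_ge_atTop 1] with n hn
    have h := lG_upper (y := y n) (a := a) (by linarith) ha ha1
    linarith

lemma iter_lemma {y : ℕ → ℝ} (hy : Tendsto y atTop atTop) (k : ℕ) :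
    Tendsto (fun n => lG (y n + k / 2) - lG (y n) - (k / 2) * Real.log (y n)) atTop (nhds 0) := by
  induction k with
  | zero => simpa using tendsto_const_nhds
  | succ k ih =>
    have hy' : Tendsto (fun n => y n + (k:ℝ) / 2) atTop atTop :=
      tendsto_atTop_add_const_right _ _ hy
    have h1 := step_lemma hy' (a := (1:ℝ)/2) (by norm_num) (by norm_num)
    have h2 := log_shift hy ((k:ℝ)/2) (by positivity)
    have h3 := (h1.add ih).add (h2.const_mul ((1:ℝ)/2))
    rw [show (0:ℝ) + 0 + 1/2 * 0 = 0 by norm_num] at h3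
    apply h3.congr
    intro n
    push_cast
    ring

/-- `(log n + K) / n ^ β → 0` for `β > 0`. -/
lemma master_limit {β : ℝ} (hβ : 0 < β) (K : ℝ) :
    Tendsto (fun n : ℕ => (Real.log n + K) / (n : ℝ) ^ β) atTop (nhds 0) := by
  have h1 : Tendsto (fun x : ℝ => Real.log x / x ^ β) atTop (nhds 0) :=
    (isLittleO_log_rpow_atTop hβ).tendsto_div_nhds_zero
  have h2 : Tendsto (fun x : ℝ => K / x ^ β) atTop (nhds 0) := by
    have := (tendsto_rpow_atTop hβ).inv_tendsto_atTop
    simpa [div_eq_mul_inv] using this.const_mul K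
  have h3 := (h1.add h2).comp (tendsto_natCast_atTop_atTop (R := ℝ))
  rw [show (0:ℝ) + 0 = 0 by norm_num] at h3
  apply h3.congr
  intro n
  simp [Function.comp, ← add_div]

lemma stirling_weak :
    Tendsto (fun m : ℕ => (Real.log m.factorial - m * Real.log m + m) / m) atTop (nhds 0) := by
  have hpos : (0:ℝ) < Real.sqrt π := Real.sqrt_pos.2 Real.pi_pos
  have h1 : Tendsto (fun m : ℕ => Real.log (Stirling.stirlingSeq m)) atTop
      (nhds (Real.log (Real.sqrt π))) :=
    (Real.continuousAt_log hpos.ne').tendsto.comp Stirling.tendsto_stirlingSeq_sqrt_pi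
  have h2 : Tendsto (fun m : ℕ => Real.log (Stirling.stirlingSeq m) / m) atTop (nhds 0) := by
    have := h1.div_atTop (tendsto_natCast_atTop_atTop (R := ℝ))
    exact this
  have h3 : Tendsto (fun m : ℕ => (1/2 * Real.log (2 * m)) / m) atTop (nhds 0) := by
    have h4 := master_limit one_pos (Real.log 2)
    have h5 := h4.const_mul (1/2 : ℝ)
    rw [mul_zero] at h5
    apply h5.congr'
    filter_upwards [eventually_ge_atTop 1] with m hm
    have hm' : (0:ℝ) < m := by exact_mod_cast hm
    rw [Real.log_mul two_ne_zero hm'.ne', Real.rpow_one]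
    ring
  have h6 := h2.add h3
  rw [add_zero] at h6
  apply h6.congr'
  filter_upwards [eventually_ge_atTop 1] with m hm
  have hm' : (0:ℝ) < m := by exact_mod_cast hm
  rw [Stirling.log_stirlingSeq_formula]
  rw [Real.log_div hm'.ne' (Real.exp_ne_zero 1), Real.log_exp]
  field_simp
  ring

/-- elementary bound: for `1 ≤ p ≤ q ≤ p + 1`, `|q log q - p log p - (q - p)| ≤ log q + 1`. -/
lemma xlogx_diff_bound {p q : ℝ} (hp : 1 ≤ p) (hpq : p ≤ q) (hq : q ≤ p + 1) :
    |q * Real.log q - p * Real.log p - (q - p)| ≤ Real.log q + 1 := by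
  have hp0 : (0:ℝ) < p := by linarith
  have hq0 : (0:ℝ) < q := by linarith
  have hlq : 0 ≤ Real.log q := Real.log_nonneg (by linarith)
  have hkey : q * Real.log q - p * Real.log p = (q - p) * Real.log q + p * Real.log (q / p) := by
    rw [Real.log_div hq0.ne' hp0.ne']
    ring
  have h1 : 0 ≤ p * Real.log (q / p) := by
    apply mul_nonneg hp0.le
    apply Real.log_nonneg
    rw [le_div_iff₀ hp0]; linarith
  have h2 : p * Real.log (q / p) ≤ q - p := by
    have := Real.log_le_sub_one_of_pos (show (0:ℝ) < q / p by positivity)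
    have h3 : p * Real.log (q / p) ≤ p * (q / p - 1) := by nlinarith
    rw [mul_sub, mul_div_cancel₀ _ hp0.ne'] at h3
    linarith
  have h4 : 0 ≤ (q - p) * Real.log q := mul_nonneg (by linarith) hlq
  have h5 : (q - p) * Real.log q ≤ Real.log q := by nlinarith
  rw [abs_le]
  constructor <;> nlinarith

lemma tendsto_nat_div_two : Tendsto (fun n : ℕ => n / 2) atTop atTop :=
  tendsto_atTop_atTop.2 fun k => ⟨2 * k, fun n hn => by omega⟩

lemma log_add_one_div_tendsto : Tendsto (fun n : ℕ => (Real.log n + 1) / n) atTop (nhds 0) := by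
  have := master_limit one_pos 1
  apply this.congr
  intro n
  rw [Real.rpow_one]

/-- factorial-pivot helper: `(log k! - c log c + c)/n → 0` when `k = k(n)` tendsto atTop,
`|k - c| ≤ 1`, `k/n ≤ 1` etc.  We just do the two needed cases directly below. -/
lemma stirling_half : Tendsto
    (fun n : ℕ => (lG ((n:ℝ)/2) - ((n:ℝ)/2) * Real.log ((n:ℝ)/2) + (n:ℝ)/2) / n)
    atTop (nhds 0) := by
  set c : ℕ → ℝ := fun n => (n:ℝ)/2 with hcdef
  have hc : ∀ n, c n = (n:ℝ)/2 := fun _ => rfl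
  -- lower sequence
  have TL : Tendsto (fun n : ℕ => (Real.log (Nat.factorial (n/2)) - c n * Real.log (c n) + c n) / n)
      atTop (nhds 0) := by
    have t1 : Tendsto (fun n : ℕ => ((Real.log (Nat.factorial (n/2)) - (n/2 : ℕ) * Real.log (n/2 : ℕ) + (n/2 : ℕ)) / (n/2 : ℕ)) * (((n/2 : ℕ):ℝ) / n)) atTop (nhds 0) := by
      apply squeeze_zero_norm' (a := fun n : ℕ =>
        |(Real.log (Nat.factorial (n/2)) - (n/2 : ℕ) * Real.log (n/2 : ℕ) + (n/2 : ℕ)) / (n/2 : ℕ)|)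
      · filter_upwards [eventually_ge_atTop 1] with n hn
        rw [norm_mul, Real.norm_eq_abs, Real.norm_eq_abs]
        have h1 : |((n/2 : ℕ):ℝ) / n| ≤ 1 := by
          rw [abs_of_nonneg (by positivity)]
          rw [div_le_one (by exact_mod_cast hn)]
          exact_mod_cast Nat.div_le_self n 2
        nlinarith [abs_nonneg ((Real.log (Nat.factorial (n/2)) - (n/2 : ℕ) * Real.log (n/2 : ℕ) + (n/2 : ℕ)) / (n/2 : ℕ))]
      · have := (stirling_weak.comp tendsto_nat_div_two).abs
        simpa using this
    have t2 : Tendsto (fun n : ℕ => ((n/2:ℕ) * Real.log (n/2:ℕ) - (n/2:ℕ) - (c n * Real.log (c n) - c n)) / n) atTop (nhds 0) := by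
      apply squeeze_zero_norm' (a := fun n : ℕ => (Real.log n + 1) / n)
      · filter_upwards [eventually_ge_atTop 2] with n hn
        have hn0 : (0:ℝ) < n := by exact_mod_cast (by omega : 0 < n)
        have hm1 : 1 ≤ n / 2 := by omega
        have hm1' : (1:ℝ) ≤ ((n/2:ℕ):ℝ) := by exact_mod_cast hm1
        have hle : ((n/2:ℕ):ℝ) ≤ c n := by
          rw [hc n]; exact_mod_cast Nat.cast_div_le
        have hle2 : c n ≤ ((n/2:ℕ):ℝ) + 1 := by
          rw [hc n]
          have : (n:ℝ) ≤ 2 * ((n/2:ℕ):ℝ) + 2 := by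
            exact_mod_cast (by omega : n ≤ 2 * (n/2) + 2)
          linarith
        have hb := xlogx_diff_bound hm1' hle hle2
        rw [Real.norm_eq_abs, abs_div, abs_of_pos hn0, div_le_div_iff_of_pos_right hn0]
        have hcn : c n ≤ (n:ℝ) := by rw [hc n]; linarith
        have hlog : Real.log (c n) ≤ Real.log n := Real.log_le_log (by rw [hc n]; positivity) hcn
        calc |(n/2:ℕ) * Real.log (n/2:ℕ) - (n/2:ℕ) - (c n * Real.log (c n) - c n)|
            = |c n * Real.log (c n) - (n/2:ℕ) * Real.log (n/2:ℕ) - (c n - (n/2:ℕ))| := by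
              rw [← abs_neg]; ring_nf
          _ ≤ Real.log (c n) + 1 := hb
          _ ≤ Real.log n + 1 := by linarith
      · exact log_add_one_div_tendsto
    have := t1.add t2
    rw [add_zero] at this
    apply this.congr'
    filter_upwards [eventually_ge_atTop 2] with n hn
    have hn0 : (n:ℝ) ≠ 0 := by exact_mod_cast (by omega : n ≠ 0)
    have hm0 : ((n/2:ℕ):ℝ) ≠ 0 := by exact_mod_cast (by omega : n/2 ≠ 0)
    field_simp
    ring
  -- upper sequence
  have TU : Tendsto (fun n : ℕ => (Real.log (Nat.factorial (n/2+1)) - c n * Real.log (c n) + c n) / n)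
      atTop (nhds 0) := by
    have t1 : Tendsto (fun n : ℕ => ((Real.log (Nat.factorial (n/2+1)) - (n/2+1 : ℕ) * Real.log (n/2+1 : ℕ) + (n/2+1 : ℕ)) / (n/2+1 : ℕ)) * (((n/2+1 : ℕ):ℝ) / n)) atTop (nhds 0) := by
      apply squeeze_zero_norm' (a := fun n : ℕ =>
        |(Real.log (Nat.factorial (n/2+1)) - (n/2+1 : ℕ) * Real.log (n/2+1 : ℕ) + (n/2+1 : ℕ)) / (n/2+1 : ℕ)|)
      · filter_upwards [eventually_ge_atTop 2] with n hn
        rw [norm_mul, Real.norm_eq_abs, Real.norm_eq_abs]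
        have h1 : |((n/2+1 : ℕ):ℝ) / n| ≤ 1 := by
          rw [abs_of_nonneg (by positivity)]
          rw [div_le_one (by exact_mod_cast (by omega : 0 < n))]
          exact_mod_cast (by omega : n/2+1 ≤ n)
        nlinarith [abs_nonneg ((Real.log (Nat.factorial (n/2+1)) - (n/2+1 : ℕ) * Real.log (n/2+1 : ℕ) + (n/2+1 : ℕ)) / (n/2+1 : ℕ))]
      · have h2 : Tendsto (fun n : ℕ => n/2+1) atTop atTop :=
          tendsto_atTop_atTop.2 fun k => ⟨2 * k, fun n hn => by omega⟩
        have := (stirling_weak.comp h2).abs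
        simpa using this
    have t2 : Tendsto (fun n : ℕ => ((n/2+1:ℕ) * Real.log (n/2+1:ℕ) - (n/2+1:ℕ) - (c n * Real.log (c n) - c n)) / n) atTop (nhds 0) := by
      apply squeeze_zero_norm' (a := fun n : ℕ => (Real.log n + 1) / n)
      · filter_upwards [eventually_ge_atTop 2] with n hn
        have hn0 : (0:ℝ) < n := by exact_mod_cast (by omega : 0 < n)
        have hc1 : (1:ℝ) ≤ c n := by
          rw [hc n]
          have : (2:ℝ) ≤ n := by exact_mod_cast hn
          linarith
        have hle : ((n/2:ℕ):ℝ) ≤ c n := by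
          rw [hc n]; exact_mod_cast Nat.cast_div_le
        have hle2 : c n ≤ ((n/2:ℕ):ℝ) + 1 := by
          rw [hc n]
          have : (n:ℝ) ≤ 2 * ((n/2:ℕ):ℝ) + 2 := by
            exact_mod_cast (by omega : n ≤ 2 * (n/2) + 2)
          linarith
        have hcast : ((n/2+1:ℕ):ℝ) = ((n/2:ℕ):ℝ) + 1 := by push_cast; ring
        have h7 : c n ≤ ((n/2+1:ℕ):ℝ) := by rw [hcast]; exact hle2
        have h8 : ((n/2+1:ℕ):ℝ) ≤ c n + 1 := by rw [hcast]; linarith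
        have hb := xlogx_diff_bound hc1 h7 h8
        have hkn : ((n/2+1:ℕ):ℝ) ≤ (n:ℝ) := by exact_mod_cast (by omega : n/2+1 ≤ n)
        have hlog : Real.log ((n/2+1:ℕ):ℝ) ≤ Real.log n := Real.log_le_log (by positivity) hkn
        rw [Real.norm_eq_abs, abs_div, abs_of_pos hn0, div_le_div_iff_of_pos_right hn0]
        calc |(n/2+1:ℕ) * Real.log (n/2+1:ℕ) - (n/2+1:ℕ) - (c n * Real.log (c n) - c n)|
            = |((n/2+1:ℕ):ℝ) * Real.log ((n/2+1:ℕ):ℝ) - c n * Real.log (c n) - (((n/2+1:ℕ):ℝ) - c n)| := by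
              ring_nf
          _ ≤ Real.log ((n/2+1:ℕ):ℝ) + 1 := hb
          _ ≤ Real.log n + 1 := by linarith
      · exact log_add_one_div_tendsto
    have := t1.add t2
    rw [add_zero] at this
    apply this.congr'
    filter_upwards [eventually_ge_atTop 2] with n hn
    have hn0 : (n:ℝ) ≠ 0 := by exact_mod_cast (by omega : n ≠ 0)
    have hm0 : ((n/2+1:ℕ):ℝ) ≠ 0 := by exact_mod_cast (by omega : n/2+1 ≠ 0)
    field_simp
    ring
  -- sandwich
  apply tendsto_of_tendsto_of_tendsto_of_le_of_le' TL TU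
  · filter_upwards [eventually_ge_atTop 2] with n hn
    have hn0 : (0:ℝ) < n := by exact_mod_cast (by omega : 0 < n)
    have hm1 : (1:ℝ) ≤ ((n/2:ℕ):ℝ) := by exact_mod_cast (by omega : 1 ≤ n/2)
    have hle : ((n/2:ℕ):ℝ) ≤ c n := by rw [hc n]; exact_mod_cast Nat.cast_div_le
    have hmono := Real.Gamma_strictMonoOn_Ici.monotoneOn
      (Set.mem_Ici.2 (by linarith : (2:ℝ) ≤ ((n/2:ℕ):ℝ) + 1))
      (Set.mem_Ici.2 (show (2:ℝ) ≤ c n + 1 by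
        rw [hc n]
        have h9 : (2:ℝ) ≤ n := by exact_mod_cast hn
        linarith))
      (by linarith : ((n/2:ℕ):ℝ) + 1 ≤ c n + 1)
    have hfac : Real.Gamma (((n/2:ℕ):ℝ) + 1) = (Nat.factorial (n/2) : ℝ) :=
      Real.Gamma_nat_eq_factorial (n/2)
    have hlog : Real.log (Nat.factorial (n/2)) ≤ lG (c n) := by
      rw [lG, ← hfac]
      exact Real.log_le_log (by rw [hfac]; positivity) hmono
    gcongr
  · filter_upwards [eventually_ge_atTop 2] with n hn
    have hn0 : (0:ℝ) < n := by exact_mod_cast (by omega : 0 < n)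
    have hle2 : c n ≤ ((n/2:ℕ):ℝ) + 1 := by
      rw [hc n]
      have : (n:ℝ) ≤ 2 * ((n/2:ℕ):ℝ) + 2 := by
        exact_mod_cast (by omega : n ≤ 2 * (n/2) + 2)
      linarith
    have hc2 : (2:ℝ) ≤ c n + 1 := by
      rw [hc n]
      have h9 : (2:ℝ) ≤ n := by exact_mod_cast hn
      linarith
    have hmono := Real.Gamma_strictMonoOn_Ici.monotoneOn
      (Set.mem_Ici.2 hc2)
      (Set.mem_Ici.2 (by push_cast; linarith [hle2, hc2] : (2:ℝ) ≤ ((n/2+1:ℕ):ℝ) + 1))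
      (by push_cast; push_cast at hle2; linarith : c n + 1 ≤ ((n/2+1:ℕ):ℝ) + 1)
    have hfac : Real.Gamma (((n/2+1:ℕ):ℝ) + 1) = (Nat.factorial (n/2+1) : ℝ) :=
      Real.Gamma_nat_eq_factorial (n/2+1)
    have hlog : lG (c n) ≤ Real.log (Nat.factorial (n/2+1)) := by
      rw [lG, ← hfac]
      exact Real.log_le_log (Real.Gamma_pos_of_pos (by rw [hc n]; positivity)) hmono
    gcongr

lemma lG_abs_bound {x : ℝ} (hx : 0 ≤ x) : |lG x| ≤ (x + 2) * Real.log (x + 2) := by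
  have hx1 : (0:ℝ) < x + 1 := by linarith
  have hG : 0 < Real.Gamma (x + 1) := Real.Gamma_pos_of_pos hx1
  have hlog2 : 0 ≤ Real.log (x + 2) := Real.log_nonneg (by linarith)
  -- lower bound
  have hlow : -((x + 2) * Real.log (x + 2)) ≤ lG x := by
    have h1 : Real.Gamma (x + 1 + 1) = (x + 1) * Real.Gamma (x + 1) :=
      Real.Gamma_add_one hx1.ne'
    have h2 : (1:ℝ) ≤ Real.Gamma (x + 1 + 1) := by
      have := Real.Gamma_strictMonoOn_Ici.monotoneOn (Set.mem_Ici.2 le_rfl)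
        (Set.mem_Ici.2 (by linarith : (2:ℝ) ≤ x + 1 + 1)) (by linarith)
      rwa [Real.Gamma_two] at this
    have h3 : 1 / (x + 1) ≤ Real.Gamma (x + 1) := by
      rw [div_le_iff₀ hx1]
      nlinarith [h1, h2]
    have h4 : -Real.log (x + 1) ≤ lG x := by
      have := Real.log_le_log (by positivity) h3
      rwa [Real.log_div one_ne_zero hx1.ne', Real.log_one, zero_sub] at this
    have h5 : Real.log (x + 1) ≤ Real.log (x + 2) := Real.log_le_log (by positivity) (by linarith)
    have : Real.log (x + 2) ≤ (x + 2) * Real.log (x + 2) := by nlinarith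
    simp only [lG] at *
    linarith
  -- upper bound
  have hup : lG x ≤ (x + 2) * Real.log (x + 2) := by
    rcases le_or_gt x 1 with h | h
    · have h1 : Real.Gamma (x + 1) ≤ 1 := by
        have hcvx := Real.convexOn_Gamma.2 (Set.mem_Ioi.2 one_pos)
          (Set.mem_Ioi.2 two_pos) (by linarith : (0:ℝ) ≤ 1 - x) hx (by ring)
        simp only [smul_eq_mul] at hcvx
        rw [Real.Gamma_one, Real.Gamma_two] at hcvx
        have hc : (1 - x) * 1 + x * 2 = x + 1 := by ring
        rw [hc] at hcvx
        linarith
      have : lG x ≤ 0 := Real.log_nonpos (by positivity) h1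
      nlinarith
    · set k := ⌈x⌉₊ with hk
      have hk1 : 1 ≤ k := Nat.one_le_ceil_iff.2 (by linarith)
      have hkx : x ≤ (k:ℝ) := Nat.le_ceil x
      have hkx2 : (k:ℝ) < x + 1 := Nat.ceil_lt_add_one hx
      have h1 : Real.Gamma (x + 1) ≤ Real.Gamma ((k:ℝ) + 1) := by
        apply Real.Gamma_strictMonoOn_Ici.monotoneOn
          (Set.mem_Ici.2 (by linarith : (2:ℝ) ≤ x + 1))
          (Set.mem_Ici.2 (by exact_mod_cast (by linarith : (2:ℝ) ≤ (k:ℝ) + 1)))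
          (by linarith)
      have h2 : Real.Gamma ((k:ℝ) + 1) = (Nat.factorial k : ℝ) := Real.Gamma_nat_eq_factorial k
      have h3 : (Nat.factorial k : ℝ) ≤ (k:ℝ) ^ k := by
        exact_mod_cast Nat.factorial_le_pow k
      have h4 : lG x ≤ Real.log ((k:ℝ) ^ k) := by
        apply Real.log_le_log hG
        rw [h2] at h1
        exact h1.trans h3
      rw [Real.log_pow] at h4
      have h5 : Real.log (k:ℝ) ≤ Real.log (x + 2) :=
        Real.log_le_log (by exact_mod_cast hk1) (by linarith)
      have h6 : (k:ℝ) ≤ x + 2 := by linarith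
      have h7 : 0 ≤ Real.log (k:ℝ) := Real.log_natCast_nonneg k
      calc lG x ≤ (k:ℝ) * Real.log (k:ℝ) := h4
        _ ≤ (x + 2) * Real.log (x + 2) := by nlinarith
  rw [abs_le]
  exact ⟨hlow, hup⟩

set_option maxHeartbeats 1600000 in
/-- For `b > 0`, `α > 0`, `r = b n^α` and fixed `ℓ ≥ 0`, the expected sectional volume
`G_ℓ(n) = (Γ((n-ℓ)/r + 1)/Γ((n-ℓ)/2 + 1)) (Γ(n/2 + 1)/Γ(n/r + 1))^{(n-ℓ)/n}`
tends to `e^{ℓ/2}`. -/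
theorem limit_sectional_volume_alpha_pos (b α : ℝ) (hb : 0 < b) (hα : 0 < α) (ℓ : ℕ) :
    Filter.Tendsto
      (fun n : ℕ =>
        (Real.Gamma (((n : ℝ) - ℓ) / (b * (n : ℝ) ^ α) + 1) /
            Real.Gamma (((n : ℝ) - ℓ) / 2 + 1)) *
          (Real.Gamma ((n : ℝ) / 2 + 1) / Real.Gamma ((n : ℝ) / (b * (n : ℝ) ^ α) + 1)) ^
            (((n : ℝ) - ℓ) / n))
      Filter.atTop (nhds (Real.exp ((ℓ : ℝ) / 2))) := by
  set R : ℕ → ℝ := fun n => b * (n:ℝ) ^ α with hR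
  set u : ℕ → ℝ := fun n => ((n:ℝ) - ℓ) / R n with hu
  set v : ℕ → ℝ := fun n => ((n:ℝ) - ℓ) / 2 with hv
  set w : ℕ → ℝ := fun n => (n:ℝ) / 2 with hw
  set z : ℕ → ℝ := fun n => (n:ℝ) / R n with hz
  set s : ℕ → ℝ := fun n => (ℓ:ℝ) / R n with hs
  -- basic eventual facts
  have hRtop : Tendsto R atTop atTop := by
    have h1 : Tendsto (fun x : ℝ => b * x ^ α) atTop atTop :=
      (tendsto_rpow_atTop hα).const_mul_atTop hb
    exact h1.comp tendsto_natCast_atTop_atTop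
  have hRpos : ∀ n : ℕ, 1 ≤ n → 0 < R n := by
    intro n hn
    have : (0:ℝ) < (n:ℝ) := by exact_mod_cast hn
    positivity
  have hRge1 : ∀ n : ℕ, 1 ≤ n → b ≤ R n := by
    intro n hn
    have h1 : (1:ℝ) ≤ (n:ℝ) := by exact_mod_cast hn
    have h2 : (1:ℝ) ≤ (n:ℝ) ^ α := Real.one_le_rpow h1 hα.le
    show b ≤ b * (n:ℝ) ^ α
    nlinarith
  -- A term
  have TA : Tendsto (fun n => lG (u n) - lG (z n)) atTop (nhds 0) := by
    apply squeeze_zero_norm' (a := fun n : ℕ =>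
      ((ℓ:ℝ)/b) * ((Real.log n + (1 + Real.log (1/b + 1))) / (n:ℝ) ^ α))
    · filter_upwards [eventually_ge_atTop (ℓ + 1), eventually_ge_atTop 1,
        hRtop.eventually_ge_atTop (ℓ:ℝ)] with n hn hn1 hnR
      have hn0 : (0:ℝ) < n := by exact_mod_cast hn1
      have hRp := hRpos n hn1
      have hupos : 0 ≤ u n := by
        simp only [hu]
        have : (ℓ:ℝ) ≤ (n:ℝ) := by exact_mod_cast (by omega : ℓ ≤ n)
        exact div_nonneg (by linarith) hRp.le
      have hs0 : 0 ≤ s n := by simp only [hs]; positivity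
      have hs1 : s n ≤ 1 := by simp only [hs]; rw [div_le_one hRp]; exact hnR
      have huz : u n + s n = z n := by simp only [hu, hs, hz]; field_simp; ring
      have hzpos : 0 ≤ z n := by simp only [hz]; positivity
      have hL12 : Real.log (u n + 1) ≤ Real.log (z n + 1) := by
        apply Real.log_le_log (by positivity)
        rw [← huz]; linarith
      have hL2nn : 0 ≤ Real.log (z n + 1) := Real.log_nonneg (by linarith)
      have hdiff : Real.log (z n + 1) - Real.log (u n + 1) ≤ s n := by
        rw [← Real.log_div (by positivity) (by positivity)]
        have h1 := Real.log_le_sub_one_of_pos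
          (show (0:ℝ) < (z n + 1)/(u n + 1) by positivity)
        have h2 : (z n + 1)/(u n + 1) - 1 = (s n) / (u n + 1) := by
          rw [← huz]; field_simp; ring
        have h3 : s n / (u n + 1) ≤ s n := by
          rw [div_le_iff₀ (by positivity)]
          nlinarith
        linarith
      have hup := lG_upper (y := u n) (a := s n) hupos hs0 hs1
      have hlo := lG_lower (y := u n) (a := s n) hupos hs0 hs1
      rw [huz] at hup hlo
      have habs : |lG (u n) - lG (z n)| ≤ s n * (1 + Real.log (z n + 1)) := by
        rw [abs_le]
        have he : u n + 1 + s n = z n + 1 := by rw [← huz]; ring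
        rw [he] at hlo
        constructor <;> nlinarith
      rw [Real.norm_eq_abs]
      refine habs.trans ?_
      -- s n * (1 + log(z n + 1)) ≤ (ℓ/b) * ((log n + (1 + K))/n^α)
      have hnalpha : (0:ℝ) < (n:ℝ) ^ α := by positivity
      have hzb : z n ≤ (n:ℝ) / b := by
        simp only [hz]
        rw [div_le_div_iff₀ hRp hb]
        have := hRge1 n hn1
        nlinarith
      have hz1 : z n + 1 ≤ (1/b + 1) * n := by
        have h1 : (1:ℝ) ≤ (n:ℝ) := by exact_mod_cast hn1
        have : (n:ℝ)/b = (1/b) * n := by ring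
        nlinarith
      have hlz : Real.log (z n + 1) ≤ Real.log (1/b + 1) + Real.log n := by
        have h1 := Real.log_le_log (by positivity) hz1
        rwa [Real.log_mul (by positivity) hn0.ne'] at h1
      have hsn : s n ≤ (ℓ:ℝ)/b / (n:ℝ)^α := by
        simp only [hs, hR]
        rw [div_div]
      have hfin : s n * (1 + Real.log (z n + 1)) ≤
          ((ℓ:ℝ)/b / (n:ℝ)^α) * (1 + Real.log (1/b+1) + Real.log n) := by
        apply mul_le_mul hsn (by linarith) (by nlinarith) (by positivity)
      refine hfin.trans (le_of_eq ?_)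
      ring
    · have := (master_limit hα (1 + Real.log (1/b + 1))).const_mul ((ℓ:ℝ)/b)
      simpa using this
  -- B term
  have hvtop : Tendsto v atTop atTop := by
    have h1 : Tendsto (fun n : ℕ => ((n:ℝ) - ℓ)) atTop atTop :=
      tendsto_atTop_add_const_right _ (-(ℓ:ℝ)) tendsto_natCast_atTop_atTop |>.congr
        (fun n => by ring)
    exact h1.atTop_div_const two_pos
  have TB : Tendsto (fun n => lG (w n) - lG (v n) - (ℓ:ℝ)/2 * Real.log (w n)) atTop (nhds 0) := by
    have h1 := iter_lemma hvtop ℓ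
    have h2 := (log_shift hvtop ((ℓ:ℝ)/2) (by positivity)).const_mul ((ℓ:ℝ)/2)
    have h3 := h1.sub h2
    rw [mul_zero, sub_zero] at h3
    apply h3.congr
    intro n
    have hvw : v n + (ℓ:ℝ)/2 = w n := by simp only [hv, hw]; ring
    rw [hvw]
    ring
  -- C term
  have TC : Tendsto (fun n => (ℓ:ℝ)/2 * Real.log (w n) - (ℓ:ℝ)/(n:ℝ) * lG (w n)) atTop
      (nhds ((ℓ:ℝ)/2)) := by
    have h1 := stirling_half.const_mul (ℓ:ℝ)
    rw [mul_zero] at h1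
    have h2 := (tendsto_const_nhds (x := (ℓ:ℝ)/2) (f := atTop (α := ℕ))).sub h1
    rw [sub_zero] at h2
    apply h2.congr'
    filter_upwards [eventually_ge_atTop 1] with n hn
    have hn0 : (n:ℝ) ≠ 0 := by
      have : (0:ℝ) < n := by exact_mod_cast hn
      exact this.ne'
    simp only [hw]
    field_simp
    ring
  -- D term
  have TD : Tendsto (fun n : ℕ => (ℓ:ℝ)/(n:ℝ) * lG (z n)) atTop (nhds 0) := by
    apply squeeze_zero_norm' (a := fun n : ℕ =>
      ((ℓ:ℝ)/b) * ((Real.log n + Real.log (1/b + 2)) / (n:ℝ) ^ α)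
      + (2*(ℓ:ℝ)) * ((Real.log n + Real.log (1/b + 2)) / (n:ℝ)))
    · filter_upwards [eventually_ge_atTop 1] with n hn1
      have hn0 : (0:ℝ) < n := by exact_mod_cast hn1
      have hRp := hRpos n hn1
      have hzpos : 0 ≤ z n := by simp only [hz]; positivity
      have hzb : z n ≤ (n:ℝ) / b := by
        simp only [hz]
        rw [div_le_div_iff₀ hRp hb]
        have := hRge1 n hn1
        nlinarith
      have hz2 : z n + 2 ≤ (1/b + 2) * n := by
        have h1 : (1:ℝ) ≤ (n:ℝ) := by exact_mod_cast hn1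
        have : (n:ℝ)/b = (1/b) * n := by ring
        nlinarith
      have hlz : Real.log (z n + 2) ≤ Real.log (1/b + 2) + Real.log n := by
        have h1 := Real.log_le_log (by positivity) hz2
        rwa [Real.log_mul (by positivity) hn0.ne'] at h1
      have hlznn : 0 ≤ Real.log (z n + 2) := Real.log_nonneg (by linarith)
      have hgb := lG_abs_bound hzpos
      rw [Real.norm_eq_abs, abs_mul, abs_of_nonneg (by positivity : (0:ℝ) ≤ (ℓ:ℝ)/(n:ℝ))]
      have step1 : (ℓ:ℝ)/(n:ℝ) * |lG (z n)| ≤ (ℓ:ℝ)/(n:ℝ) * ((z n + 2) * Real.log (z n + 2)) :=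
        mul_le_mul_of_nonneg_left hgb (by positivity)
      refine step1.trans ?_
      have hnalpha : (0:ℝ) < (n:ℝ) ^ α := by positivity
      have hzn2 : (z n + 2) = (n:ℝ)/R n + 2 := by simp only [hz]
      have key : (ℓ:ℝ)/(n:ℝ) * ((z n + 2) * Real.log (z n + 2)) ≤
          ((ℓ:ℝ)/(b * (n:ℝ)^α) + 2*(ℓ:ℝ)/(n:ℝ)) * (Real.log (1/b+2) + Real.log n) := by
        have e1 : (ℓ:ℝ)/(n:ℝ) * (z n + 2) = (ℓ:ℝ)/(b * (n:ℝ)^α) + 2*(ℓ:ℝ)/(n:ℝ) := by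
          simp only [hzn2, hR]
          field_simp
        rw [← mul_assoc, e1]
        apply mul_le_mul_of_nonneg_left hlz
        have : (0:ℝ) < b * (n:ℝ)^α := by positivity
        positivity
      refine key.trans (le_of_eq ?_)
      field_simp
      ring
    · have h1 := (master_limit hα (Real.log (1/b + 2))).const_mul ((ℓ:ℝ)/b)
      have h2' := (master_limit one_pos (Real.log (1/b + 2))).const_mul (2*(ℓ:ℝ))
      have h2 : Tendsto (fun n : ℕ => (2*(ℓ:ℝ)) * ((Real.log n + Real.log (1/b + 2)) / (n:ℝ)))
          atTop (nhds 0) := by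
        rw [show (0:ℝ) = 2*(ℓ:ℝ) * 0 by ring]
        apply h2'.congr
        intro n
        rw [Real.rpow_one]
      have := h1.add h2
      simpa using this
  -- exponent
  have TE : Tendsto (fun n => lG (u n) - lG (v n) + ((n:ℝ) - ℓ)/(n:ℝ) * (lG (w n) - lG (z n)))
      atTop (nhds ((ℓ:ℝ)/2)) := by
    have h := ((TA.add TB).add TC).add TD
    rw [add_zero, zero_add, zero_add] at h
    apply h.congr'
    filter_upwards [eventually_ge_atTop 1] with n hn
    have hn0 : (n:ℝ) ≠ 0 := by
      have : (0:ℝ) < n := by exact_mod_cast hn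
      exact this.ne'
    field_simp
    ring
  -- conclude
  have hexp := (Real.continuous_exp.tendsto _).comp TE
  apply hexp.congr'
  filter_upwards [eventually_ge_atTop (ℓ + 1), eventually_ge_atTop 1] with n hn hn1
  have hRp := hRpos n hn1
  have hnl : (0:ℝ) < (n:ℝ) - ℓ := by
    have : (ℓ:ℝ) + 1 ≤ (n:ℝ) := by exact_mod_cast hn
    linarith
  have hupos : 0 < u n + 1 := by
    have : 0 < u n := by simp only [hu]; positivity
    linarith
  have hvpos : 0 < v n + 1 := by
    have : 0 < v n := by simp only [hv]; positivity
    linarith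
  have hn0 : (0:ℝ) < n := by exact_mod_cast hn1
  have hwpos : 0 < w n + 1 := by
    have : 0 < w n := by simp only [hw]; positivity
    linarith
  have hzpos : 0 < z n + 1 := by
    have : 0 < z n := by simp only [hz]; positivity
    linarith
  have hGu := Real.Gamma_pos_of_pos hupos
  have hGv := Real.Gamma_pos_of_pos hvpos
  have hGw := Real.Gamma_pos_of_pos hwpos
  have hGz := Real.Gamma_pos_of_pos hzpos
  simp only [Function.comp_apply, lG]
  rw [Real.exp_add, Real.exp_sub, Real.exp_log hGu, Real.exp_log hGv]
  rw [Real.rpow_def_of_pos (by positivity : (0:ℝ) < Real.Gamma (w n + 1) / Real.Gamma (z n + 1))]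
  rw [Real.log_div hGw.ne' hGz.ne']
  rw [mul_comm (Real.log (Real.Gamma (w n + 1)) - Real.log (Real.Gamma (z n + 1)))]
end
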